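/- Let ω ∈ ℝ and K, T > 0 satisfy ω > 2KT, let μ0 ∈ (0,1/2) be such that f̄ attains its minimum over [0,1] exactly at μ0 and μ1 := 1−μ0, and set f(s) := f̄(s) − f̄(μ0). Then for every δ > 0 there exists h > 0, depending only on δ, ω, K, T, with the following property: for every d, l, ε > 0, every symmetric real 2×2 matrix e0, every c ∈ C¹((−d,d)×(−l,l), [0,1]), every u ∈ C¹((−d,d)×(−l,l), ℝ²), and every C¹ curve γ : [0,1] → (−d,d)×(−l,l) whose length ∫₀¹ ‖γ′(t)‖ dt is at least ε, if ∫₀¹ g_ε(γ(t))·‖γ′(t)‖ dt ≤ h, where g_ε(z) := (1/ε)·f(c(z)) + ε·‖∇c(z)‖² + (1/ε)·‖e(u)(z) − c(z)·e0‖², then either |c(γ(t)) − μ0| ≤ δ for all t ∈ [0,1], or |c(γ(t)) − μ1| ≤ δ for all t ∈ [0,1]. -/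

import Mathlib

open Matrix

noncomputable def fbar (ω K T : ℝ) (s : ℝ) : ℝ :=
  ω * s * (1 - s) + K * T * (s * Real.log s + (1 - s) * Real.log (1 - s))

noncomputable def gradSq (c : ℝ × ℝ → ℝ) (z : ℝ × ℝ) : ℝ :=
  (fderiv ℝ c z (1, 0)) ^ 2 + (fderiv ℝ c z (0, 1)) ^ 2

noncomputable def gradMat (u : ℝ × ℝ → ℝ × ℝ) (z : ℝ × ℝ) : Matrix (Fin 2) (Fin 2) ℝ :=
  !![(fderiv ℝ u z (1, 0)).1, (fderiv ℝ u z (0, 1)).1;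
     (fderiv ℝ u z (1, 0)).2, (fderiv ℝ u z (0, 1)).2]

noncomputable def symGrad (u : ℝ × ℝ → ℝ × ℝ) (z : ℝ × ℝ) : Matrix (Fin 2) (Fin 2) ℝ :=
  (1 / 2 : ℝ) • (gradMat u z + (gradMat u z)ᵀ)

noncomputable def frobSq (M : Matrix (Fin 2) (Fin 2) ℝ) : ℝ :=
  ∑ i, ∑ j, (M i j) ^ 2

noncomputable def genergy (f : ℝ → ℝ) (e0 : Matrix (Fin 2) (Fin 2) ℝ) (ε : ℝ)
    (u : ℝ × ℝ → ℝ × ℝ) (c : ℝ × ℝ → ℝ) (z : ℝ × ℝ) : ℝ :=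
  (1 / ε) * f (c z) + ε * gradSq c z + (1 / ε) * frobSq (symGrad u z - c z • e0)

/-! ### Auxiliary lemmas -/

lemma fbar_continuous (ω K T : ℝ) : Continuous (fbar ω K T) := by
  have h1 := Real.continuous_mul_log
  have h2 : Continuous fun s : ℝ => (1 - s) * Real.log (1 - s) :=
    h1.comp (continuous_const.sub continuous_id)
  exact ((continuous_const.mul continuous_id).mul (continuous_const.sub continuous_id)).add
    (continuous_const.mul ((h1.comp continuous_id).add h2))

lemma frobSq_nonneg (M : Matrix (Fin 2) (Fin 2) ℝ) : 0 ≤ frobSq M :=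
  Finset.sum_nonneg fun _ _ => Finset.sum_nonneg fun _ _ => sq_nonneg _

lemma frob_explicit (u : ℝ × ℝ → ℝ × ℝ) (c : ℝ × ℝ → ℝ) (e0 : Matrix (Fin 2) (Fin 2) ℝ)
    (z : ℝ × ℝ) : frobSq (symGrad u z - c z • e0) =
    ((fderiv ℝ u z (1, 0)).1 - c z * e0 0 0) ^ 2 +
    (((fderiv ℝ u z (0, 1)).1 + (fderiv ℝ u z (1, 0)).2) / 2 - c z * e0 0 1) ^ 2 +
    (((fderiv ℝ u z (1, 0)).2 + (fderiv ℝ u z (0, 1)).1) / 2 - c z * e0 1 0) ^ 2 +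
    ((fderiv ℝ u z (0, 1)).2 - c z * e0 1 1) ^ 2 := by
  have entry : ∀ i j : Fin 2, (symGrad u z - c z • e0) i j
      = (gradMat u z i j + gradMat u z j i) / 2 - c z * e0 i j := by
    intro i j
    simp [symGrad, Matrix.sub_apply, Matrix.smul_apply, Matrix.add_apply,
      Matrix.transpose_apply, smul_eq_mul]
    ring
  have g00 : gradMat u z 0 0 = (fderiv ℝ u z (1, 0)).1 := by simp [gradMat]
  have g01 : gradMat u z 0 1 = (fderiv ℝ u z (0, 1)).1 := by simp [gradMat]
  have g10 : gradMat u z 1 0 = (fderiv ℝ u z (1, 0)).2 := by simp [gradMat]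
  have g11 : gradMat u z 1 1 = (fderiv ℝ u z (0, 1)).2 := by simp [gradMat]
  rw [frobSq, Fin.sum_univ_two, Fin.sum_univ_two, Fin.sum_univ_two,
    entry 0 0, entry 0 1, entry 1 0, entry 1 1, g00, g01, g10, g11]
  ring

lemma amgm_lemma (ε Fv s : ℝ) (hε : 0 < ε) : 2 * (Fv * s) ≤ (1 / ε) * Fv ^ 2 + ε * s ^ 2 := by
  have expand : (1 / ε) * Fv ^ 2 + ε * s ^ 2 - 2 * (Fv * s) = (Fv - ε * s) ^ 2 / ε := by
    field_simp; ring
  nlinarith [div_nonneg (sq_nonneg (Fv - ε * s)) hε.le]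

lemma cs_lemma (a b w1 w2 : ℝ) :
    |w1 * a + w2 * b| ≤ Real.sqrt (a ^ 2 + b ^ 2) * Real.sqrt (w1 ^ 2 + w2 ^ 2) := by
  rw [← Real.sqrt_sq_eq_abs, ← Real.sqrt_mul (by positivity)]
  apply Real.sqrt_le_sqrt
  nlinarith [sq_nonneg (a * w2 - b * w1)]

set_option maxHeartbeats 1000000 in
/-- Energy along curves lemma: for every `δ > 0` there is `h > 0` (depending only on
`δ, ω, K, T`) such that any `C¹` curve of length at least `ε` in the rectangle along which
the energy density `g_ε` integrates to at most `h` stays δ-close to one single well of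
`f = f̄ - f̄(μ0)`. -/
theorem energy_lines (ω K T : ℝ) (hK : 0 < K) (hT : 0 < T) (hω : 2 * K * T < ω)
    (μ0 : ℝ) (hμ0 : μ0 ∈ Set.Ioo (0 : ℝ) (1 / 2))
    (hval : fbar ω K T μ0 = fbar ω K T (1 - μ0))
    (hmin : ∀ s ∈ Set.Icc (0 : ℝ) 1, s ≠ μ0 → s ≠ 1 - μ0 →
      fbar ω K T μ0 < fbar ω K T s) :
    ∀ δ > (0 : ℝ), ∃ h > (0 : ℝ),
      ∀ (d l ε : ℝ), 0 < d → 0 < l → 0 < ε →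
      ∀ e0 : Matrix (Fin 2) (Fin 2) ℝ, e0ᵀ = e0 →
      ∀ (c : ℝ × ℝ → ℝ) (u : ℝ × ℝ → ℝ × ℝ) (γ : ℝ → ℝ × ℝ),
        ContDiffOn ℝ 1 c (Set.Ioo (-d) d ×ˢ Set.Ioo (-l) l) →
        (∀ z ∈ Set.Ioo (-d) d ×ˢ Set.Ioo (-l) l, c z ∈ Set.Icc (0 : ℝ) 1) →
        ContDiffOn ℝ 1 u (Set.Ioo (-d) d ×ˢ Set.Ioo (-l) l) →
        ContDiffOn ℝ 1 γ (Set.Icc 0 1) →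
        (∀ t ∈ Set.Icc (0 : ℝ) 1, γ t ∈ Set.Ioo (-d) d ×ˢ Set.Ioo (-l) l) →
        ε ≤ ∫ t in (0 : ℝ)..1, Real.sqrt ((deriv γ t).1 ^ 2 + (deriv γ t).2 ^ 2) →
        (∫ t in (0 : ℝ)..1,
            genergy (fun s => fbar ω K T s - fbar ω K T μ0) e0 ε u c (γ t) *
              Real.sqrt ((deriv γ t).1 ^ 2 + (deriv γ t).2 ^ 2)) ≤ h →
        (∀ t ∈ Set.Icc (0 : ℝ) 1, |c (γ t) - μ0| ≤ δ) ∨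
        (∀ t ∈ Set.Icc (0 : ℝ) 1, |c (γ t) - (1 - μ0)| ≤ δ) := by
  intro δ hδ
  set f : ℝ → ℝ := fun s => fbar ω K T s - fbar ω K T μ0 with hfdef
  set μ1 : ℝ := 1 - μ0 with hμ1def
  obtain ⟨hμ0pos, hμ0half⟩ := hμ0
  have hμ01 : μ0 < μ1 := by rw [hμ1def]; linarith
  have hμ1lt : μ1 < 1 := by rw [hμ1def]; linarith
  have hf_cont : Continuous f := by
    rw [hfdef]; exact (fbar_continuous ω K T).sub continuous_const
  have hf_pos : ∀ s ∈ Set.Icc (0:ℝ) 1, s ≠ μ0 → s ≠ μ1 → 0 < f s := by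
    intro s hs h0 h1
    have := hmin s hs h0 h1
    simp only [hfdef]; linarith
  have hf_nonneg : ∀ s ∈ Set.Icc (0:ℝ) 1, 0 ≤ f s := by
    intro s hs
    rcases eq_or_ne s μ0 with rfl | h0
    · simp [hfdef]
    rcases eq_or_ne s μ1 with rfl | h1
    · simp only [hfdef]; rw [← hval]; simp
    · exact (hf_pos s hs h0 h1).le
  set δ' : ℝ := min δ ((μ1 - μ0)/4) with hδ'def
  have hδ'pos : 0 < δ' := lt_min hδ (by linarith)
  have hδ'δ : δ' ≤ δ := min_le_left _ _
  have hδ'4 : δ' ≤ (μ1 - μ0)/4 := min_le_right _ _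
  set S : Set ℝ := {s | s ∈ Set.Icc (0:ℝ) 1 ∧ δ'/2 ≤ |s - μ0| ∧ δ'/2 ≤ |s - μ1|} with hSdef
  have hSsub : S ⊆ Set.Icc (0:ℝ) 1 := fun s hs => hs.1
  have hSclosed : IsClosed S := by
    have : S = Set.Icc (0:ℝ) 1 ∩ ({s : ℝ | δ'/2 ≤ |s - μ0|} ∩ {s : ℝ | δ'/2 ≤ |s - μ1|}) := by
      ext s; simp [hSdef, and_assoc]
    rw [this]
    exact isClosed_Icc.inter
      ((isClosed_le continuous_const (continuous_id.sub continuous_const).abs).inter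
       (isClosed_le continuous_const (continuous_id.sub continuous_const).abs))
  have hScompact : IsCompact S := isCompact_Icc.of_isClosed_subset hSclosed hSsub
  have hSmem' : ∀ s : ℝ, s ∈ Set.Icc (0:ℝ) 1 → δ'/2 ≤ |s - μ0| → δ'/2 ≤ |s - μ1| → s ∈ S :=
    fun s a b c => ⟨a, b, c⟩
  have hSne : S.Nonempty := by
    have h4' : δ' ≤ (1 - μ0 - μ0)/4 := by rw [hμ1def] at hδ'4; linarith
    refine ⟨1/2, ⟨by norm_num, by norm_num⟩, ?_, ?_⟩
    · rw [abs_of_nonneg (by linarith)]; linarith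
    · rw [abs_of_nonpos (by rw [hμ1def]; linarith)]; rw [hμ1def]; linarith
  obtain ⟨s₀, hs₀S, hs₀min⟩ := hScompact.exists_isMinOn hSne hf_cont.continuousOn
  set m : ℝ := f s₀ with hmdef
  have hmne0 : s₀ ≠ μ0 := by
    intro h; have := hs₀S.2.1; rw [h] at this; simp at this; linarith
  have hmne1 : s₀ ≠ μ1 := by
    intro h; have := hs₀S.2.2; rw [h] at this; simp at this; linarith
  have hm : 0 < m := hf_pos s₀ hs₀S.1 hmne0 hmne1
  have hmle : ∀ s ∈ S, m ≤ f s := fun s hs => hs₀min hs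
  have hsqm : 0 < Real.sqrt m := Real.sqrt_pos.mpr hm
  clear_value S m
  clear hSdef hmdef hs₀min hs₀S hmne0 hmne1
  -- clamp and the primitive Φ of √f
  set cl : ℝ → ℝ := fun s => max 0 (min s 1) with hcldef
  have hclcont : Continuous cl := by
    rw [hcldef]; exact continuous_const.max (continuous_id.min continuous_const)
  have hclmem : ∀ s, cl s ∈ Set.Icc (0:ℝ) 1 := by
    intro s
    exact ⟨le_max_left _ _, max_le zero_le_one (min_le_right s 1)⟩
  have hclid : ∀ s ∈ Set.Icc (0:ℝ) 1, cl s = s := by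
    intro s hs; rw [hcldef]; simp only
    rw [min_eq_left hs.2, max_eq_right hs.1]
  set F : ℝ → ℝ := fun s => Real.sqrt (f (cl s)) with hFdef
  have hFcont : Continuous F := by
    rw [hFdef]; exact Real.continuous_sqrt.comp (hf_cont.comp hclcont)
  have hF0 : ∀ s, 0 ≤ F s := fun s => Real.sqrt_nonneg _
  have hFsq : ∀ s ∈ Set.Icc (0:ℝ) 1, F s ^ 2 = f s := by
    intro s hs; rw [hFdef]; simp only; rw [hclid s hs]
    exact Real.sq_sqrt (hf_nonneg s hs)
  have hFS : ∀ s ∈ S, Real.sqrt m ≤ F s := by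
    intro s hs; rw [hFdef]; simp only; rw [hclid s (hSsub hs)]
    exact Real.sqrt_le_sqrt (hmle s hs)
  set Φ : ℝ → ℝ := fun x => ∫ r in (0:ℝ)..x, F r with hΦdef
  have hΦd : ∀ x, HasDerivAt Φ (F x) x := by
    intro x; rw [hΦdef]
    exact (hFcont.integral_hasStrictDerivAt 0 x).hasDerivAt
  have hΦcont : Continuous Φ :=
    continuous_iff_continuousAt.mpr fun x => (hΦd x).continuousAt
  have hΦsub : ∀ a b : ℝ, Φ b - Φ a = ∫ r in a..b, F r := by
    intro a b; rw [hΦdef]; simp only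
    exact intervalIntegral.integral_interval_sub_left
      (hFcont.intervalIntegrable 0 b) (hFcont.intervalIntegrable 0 a)
  have hΦmono : ∀ a b : ℝ, a ≤ b → Φ a ≤ Φ b := by
    intro a b hab
    have h1 := hΦsub a b
    have h2 : (0:ℝ) ≤ ∫ r in a..b, F r :=
      intervalIntegral.integral_nonneg hab (fun x _ => hF0 x)
    linarith
  have hΦgap : ∀ a b : ℝ, a ≤ b → (∀ s ∈ Set.Icc a b, s ∈ S) →
      Real.sqrt m * (b - a) ≤ Φ b - Φ a := by
    intro a b hab hS'
    rw [hΦsub a b]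
    have h1 : (∫ _ in a..b, Real.sqrt m) ≤ ∫ r in a..b, F r := by
      apply intervalIntegral.integral_mono_on hab intervalIntegrable_const
        (hFcont.intervalIntegrable a b)
      intro x hx; exact hFS x (hS' x hx)
    rw [intervalIntegral.integral_const, smul_eq_mul] at h1
    linarith
  clear_value cl F Φ
  clear hcldef hFdef hΦdef
  -- the threshold
  refine ⟨min m (δ' * Real.sqrt m) / 2,
    by positivity, ?_⟩
  intro d l ε hd hl hε e0 he0 c u γ hc hcr hu hγ hγU hlen hint
  set U : Set (ℝ × ℝ) := Set.Ioo (-d) d ×ˢ Set.Ioo (-l) l with hUdef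
  have hUopen : IsOpen U := isOpen_Ioo.prod isOpen_Ioo
  set v : ℝ → ℝ := fun t => c (γ t) with hvdef
  set D : ℝ → ℝ × ℝ := fun t => derivWithin γ (Set.Icc 0 1) t with hDdef
  set N : ℝ → ℝ := fun t => Real.sqrt ((D t).1 ^ 2 + (D t).2 ^ 2) with hNdef
  set φ : ℝ → ℝ := fun t => fderiv ℝ c (γ t) (D t) with hφdef
  set E : ℝ → ℝ := fun t => genergy f e0 ε u c (γ t) with hEdef
  -- continuity package
  have hγc : ContinuousOn γ (Set.Icc 0 1) := hγ.continuousOn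
  have hmaps : Set.MapsTo γ (Set.Icc 0 1) U := fun t ht => hγU t ht
  have hcc : ContinuousOn c U := hc.continuousOn
  have hvC : ContinuousOn v (Set.Icc 0 1) := by
    rw [hvdef]; exact hcc.comp hγc hmaps
  have hfdc : ContinuousOn (fderiv ℝ c) U := hc.continuousOn_fderiv_of_isOpen hUopen le_rfl
  have hfdu : ContinuousOn (fderiv ℝ u) U := hu.continuousOn_fderiv_of_isOpen hUopen le_rfl
  have hDc : ContinuousOn D (Set.Icc 0 1) := by
    rw [hDdef]; exact hγ.continuousOn_derivWithin (uniqueDiffOn_Icc one_pos) le_rfl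
  have hNc : ContinuousOn N (Set.Icc 0 1) := by
    rw [hNdef]
    exact Real.continuous_sqrt.comp_continuousOn
      (((continuous_fst.comp_continuousOn hDc).pow 2).add
       ((continuous_snd.comp_continuousOn hDc).pow 2))
  have hφc : ContinuousOn φ (Set.Icc 0 1) := by
    rw [hφdef]; exact (hfdc.comp hγc hmaps).clm_apply hDc
  have hgE : ContinuousOn (fun z => genergy f e0 ε u c z) U := by
    have heq : (fun z => genergy f e0 ε u c z) = fun z =>
        (1/ε) * f (c z) + ε * ((fderiv ℝ c z (1, 0)) ^ 2 + (fderiv ℝ c z (0, 1)) ^ 2)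
        + (1/ε) * (((fderiv ℝ u z (1, 0)).1 - c z * e0 0 0) ^ 2 +
          (((fderiv ℝ u z (0, 1)).1 + (fderiv ℝ u z (1, 0)).2) / 2 - c z * e0 0 1) ^ 2 +
          (((fderiv ℝ u z (1, 0)).2 + (fderiv ℝ u z (0, 1)).1) / 2 - c z * e0 1 0) ^ 2 +
          ((fderiv ℝ u z (0, 1)).2 - c z * e0 1 1) ^ 2) := by
      funext z; rw [genergy, frob_explicit, gradSq]
    rw [heq]
    have hA : ContinuousOn (fun z => fderiv ℝ c z ((1:ℝ), (0:ℝ))) U :=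
      hfdc.clm_apply continuousOn_const
    have hB : ContinuousOn (fun z => fderiv ℝ c z ((0:ℝ), (1:ℝ))) U :=
      hfdc.clm_apply continuousOn_const
    have hu1 : ContinuousOn (fun z => fderiv ℝ u z ((1:ℝ), (0:ℝ))) U :=
      hfdu.clm_apply continuousOn_const
    have hu2 : ContinuousOn (fun z => fderiv ℝ u z ((0:ℝ), (1:ℝ))) U :=
      hfdu.clm_apply continuousOn_const
    have p11 : ContinuousOn (fun z => (fderiv ℝ u z ((1:ℝ), (0:ℝ))).1) U :=
      continuous_fst.comp_continuousOn hu1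
    have p21 : ContinuousOn (fun z => (fderiv ℝ u z ((1:ℝ), (0:ℝ))).2) U :=
      continuous_snd.comp_continuousOn hu1
    have p12 : ContinuousOn (fun z => (fderiv ℝ u z ((0:ℝ), (1:ℝ))).1) U :=
      continuous_fst.comp_continuousOn hu2
    have p22 : ContinuousOn (fun z => (fderiv ℝ u z ((0:ℝ), (1:ℝ))).2) U :=
      continuous_snd.comp_continuousOn hu2
    refine (ContinuousOn.add (ContinuousOn.add ?_ ?_) ?_)
    · exact continuousOn_const.mul (hf_cont.comp_continuousOn hcc)
    · exact continuousOn_const.mul ((hA.pow 2).add (hB.pow 2))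
    · refine continuousOn_const.mul ?_
      refine ContinuousOn.add (ContinuousOn.add (ContinuousOn.add ?_ ?_) ?_) ?_
      · exact (p11.sub (hcc.mul continuousOn_const)).pow 2
      · exact (((p12.add p21).div_const 2).sub (hcc.mul continuousOn_const)).pow 2
      · exact (((p21.add p12).div_const 2).sub (hcc.mul continuousOn_const)).pow 2
      · exact (p22.sub (hcc.mul continuousOn_const)).pow 2
  have hEc : ContinuousOn E (Set.Icc 0 1) := by
    rw [hEdef]; exact hgE.comp hγc hmaps
  clear_value U
  -- a.e. replacement of deriv by derivWithin
  have hgood : ∀ t ∈ Set.Ioo (0:ℝ) 1, deriv γ t = D t := by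
    intro t ht
    rw [hDdef]
    exact (derivWithin_of_mem_nhds (Icc_mem_nhds ht.1 ht.2)).symm
  have hae : ∀ g1 g2 : ℝ → ℝ, (∀ t ∈ Set.Ioo (0:ℝ) 1, g1 t = g2 t) →
      (∫ t in (0:ℝ)..1, g1 t) = ∫ t in (0:ℝ)..1, g2 t := by
    intro g1 g2 hg
    apply intervalIntegral.integral_congr_ae
    have h1 : ∀ᵐ (t : ℝ), t ≠ 1 := by
      rw [MeasureTheory.ae_iff]
      have : {a : ℝ | ¬ a ≠ 1} = {1} := by ext a; simp
      rw [this]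
      exact MeasureTheory.measure_singleton 1
    filter_upwards [h1] with t ht1 htI
    have htIoo : t ∈ Set.Ioo (0:ℝ) 1 := by
      rw [Set.uIoc_of_le zero_le_one] at htI
      exact ⟨htI.1, lt_of_le_of_ne htI.2 ht1⟩
    exact hg t htIoo
  have hlen' : ε ≤ ∫ t in (0:ℝ)..1, N t := by
    refine hlen.trans (le_of_eq ?_)
    apply hae; intro t ht; rw [hgood t ht]
  have hEN : (∫ t in (0:ℝ)..1, E t * N t) ≤ min m (δ' * Real.sqrt m) / 2 := by
    refine le_of_eq_of_le ?_ hint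
    apply hae; intro t ht
    rw [hEdef, hNdef]; simp only; rw [hgood t ht]
  have hvIcc : ∀ t ∈ Set.Icc (0:ℝ) 1, v t ∈ Set.Icc (0:ℝ) 1 := by
    intro t ht; rw [hvdef]; exact hcr (γ t) (hγU t ht)
  -- the key pointwise inequality
  have hpt : ∀ t ∈ Set.Icc (0:ℝ) 1, 2 * (F (v t) * |φ t|) ≤ E t * N t := by
    intro t ht
    have hvt := hvIcc t ht
    have hφeq : φ t = (D t).1 * (fderiv ℝ c (γ t) (1, 0))
        + (D t).2 * (fderiv ℝ c (γ t) (0, 1)) := by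
      rw [hφdef]; simp only
      have hw : (D t) = (D t).1 • ((1:ℝ), (0:ℝ)) + (D t).2 • ((0:ℝ), (1:ℝ)) := by
        ext <;> simp
      conv_lhs => rw [hw]
      rw [map_add, _root_.map_smul, _root_.map_smul, smul_eq_mul, smul_eq_mul]
    set a : ℝ := fderiv ℝ c (γ t) (1, 0) with hadef
    set b : ℝ := fderiv ℝ c (γ t) (0, 1) with hbdef
    have key2 : |φ t| ≤ Real.sqrt (a ^ 2 + b ^ 2) * N t := by
      rw [hφeq, hNdef]
      exact cs_lemma a b (D t).1 (D t).2
    have hN0 : 0 ≤ N t := by rw [hNdef]; exact Real.sqrt_nonneg _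
    have hE : (1/ε) * f (v t) + ε * (a ^ 2 + b ^ 2) ≤ E t := by
      rw [hEdef]; simp only [genergy, gradSq]
      have h3 := frobSq_nonneg (symGrad u (γ t) - c (γ t) • e0)
      have h4 : (0:ℝ) < 1/ε := by positivity
      have h5 : f (v t) = f (c (γ t)) := by rw [hvdef]
      rw [h5, ← hadef, ← hbdef]
      nlinarith
    have amgm := amgm_lemma ε (F (v t)) (Real.sqrt (a ^ 2 + b ^ 2)) hε
    have hsq : Real.sqrt (a ^ 2 + b ^ 2) ^ 2 = a ^ 2 + b ^ 2 := Real.sq_sqrt (by positivity)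
    have hFsq' : F (v t) ^ 2 = f (v t) := hFsq _ hvt
    calc 2 * (F (v t) * |φ t|)
        ≤ 2 * (F (v t) * (Real.sqrt (a ^ 2 + b ^ 2) * N t)) := by
          have := mul_le_mul_of_nonneg_left key2 (hF0 (v t))
          linarith
      _ = (2 * (F (v t) * Real.sqrt (a ^ 2 + b ^ 2))) * N t := by ring
      _ ≤ ((1/ε) * f (v t) + ε * (a ^ 2 + b ^ 2)) * N t := by
          apply mul_le_mul_of_nonneg_right _ hN0
          calc 2 * (F (v t) * Real.sqrt (a ^ 2 + b ^ 2))
              ≤ (1/ε) * F (v t) ^ 2 + ε * Real.sqrt (a ^ 2 + b ^ 2) ^ 2 := amgm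
            _ = (1/ε) * f (v t) + ε * (a ^ 2 + b ^ 2) := by rw [hFsq', hsq]
      _ ≤ E t * N t := mul_le_mul_of_nonneg_right hE hN0
  -- integrability
  have hIccuIcc : Set.uIcc (0:ℝ) 1 = Set.Icc 0 1 := Set.uIcc_of_le zero_le_one
  have hNint : IntervalIntegrable N MeasureTheory.volume 0 1 :=
    (hIccuIcc ▸ hNc).intervalIntegrable
  have hENint : IntervalIntegrable (fun t => E t * N t) MeasureTheory.volume 0 1 :=
    (hIccuIcc ▸ (hEc.mul hNc)).intervalIntegrable
  have hgC : ContinuousOn (fun t => 2 * (F (v t) * |φ t|)) (Set.Icc 0 1) :=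
    continuousOn_const.mul ((hFcont.comp_continuousOn hvC).mul hφc.abs)
  have hgint : IntervalIntegrable (fun t => 2 * (F (v t) * |φ t|)) MeasureTheory.volume 0 1 :=
    (hIccuIcc ▸ hgC).intervalIntegrable
  have hgnonneg : ∀ t, 0 ≤ 2 * (F (v t) * |φ t|) := by
    intro t; have := hF0 (v t); positivity
  -- the main reduction
  have hsuff : (∀ t ∈ Set.Icc (0:ℝ) 1, |v t - μ0| ≤ δ') ∨
      (∀ t ∈ Set.Icc (0:ℝ) 1, |v t - μ1| ≤ δ') := by
    by_contra hcon
    push_neg at hcon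
    obtain ⟨⟨t0, ht0, hfar0⟩, ⟨t1, ht1, hfar1⟩⟩ := hcon
    -- key transition lemma
    have key : ∀ μ : ℝ, (μ = μ0 ∨ μ = μ1) → ∀ ts ∈ Set.Icc (0:ℝ) 1, ∀ ty ∈ Set.Icc (0:ℝ) 1,
        |v ts - μ| < δ'/2 → δ' < |v ty - μ| → False := by
      intro μ hμcase ts hts ty hty hclose hfar
      have hSmem : ∀ s ∈ Set.Icc (0:ℝ) 1, δ'/2 ≤ |s - μ| → |s - μ| ≤ δ' → s ∈ S := by
        intro s hs h1 h2
        rcases hμcase with hμeq | hμeq <;> rw [hμeq] at h1 h2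
        · refine hSmem' s hs h1 ?_
          have tri : |μ1 - μ0| ≤ |μ1 - s| + |s - μ0| := abs_sub_le μ1 s μ0
          rw [abs_of_pos (by linarith : (0:ℝ) < μ1 - μ0), abs_sub_comm μ1 s] at tri
          linarith
        · refine hSmem' s hs ?_ h1
          have tri : |μ1 - μ0| ≤ |μ1 - s| + |s - μ0| := abs_sub_le μ1 s μ0
          rw [abs_of_pos (by linarith : (0:ℝ) < μ1 - μ0), abs_sub_comm μ1 s] at tri
          linarith
      have hx := hvIcc ts hts
      have hy := hvIcc ty hty
      obtain ⟨a', b', hab, hJlen, hminle, hlemax, hJmem⟩ :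
          ∃ a' b' : ℝ, a' ≤ b' ∧ b' - a' = δ'/2 ∧
          min (v ts) (v ty) ≤ a' ∧ b' ≤ max (v ts) (v ty) ∧
          ∀ s ∈ Set.Icc a' b', s ∈ S := by
        have habs := abs_lt.mp hclose
        rcases le_or_gt (v ty) μ with hyle | hygt
        · have hylt : v ty < μ - δ' := by
            rw [abs_of_nonpos (by linarith)] at hfar; linarith
          refine ⟨μ - δ', μ - δ'/2, by linarith, by ring, ?_, ?_, ?_⟩
          · exact le_trans (min_le_right _ _) (by linarith)
          · exact le_trans (by linarith : μ - δ'/2 ≤ v ts) (le_max_left _ _)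
          · intro s hs
            obtain ⟨hs1, hs2⟩ := hs
            refine hSmem s ⟨by linarith [hy.1], by linarith [hx.2]⟩ ?_ ?_
            · rw [abs_of_nonpos (by linarith)]; linarith
            · rw [abs_of_nonpos (by linarith)]; linarith
        · have hygt' : μ + δ' < v ty := by
            rw [abs_of_pos (by linarith)] at hfar; linarith
          refine ⟨μ + δ'/2, μ + δ', by linarith, by ring, ?_, ?_, ?_⟩
          · exact le_trans (min_le_left _ _) (by linarith)
          · exact le_trans (by linarith : μ + δ' ≤ v ty) (le_max_right _ _)
          · intro s hs
            obtain ⟨hs1, hs2⟩ := hs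
            refine hSmem s ⟨by linarith [hx.1], by linarith [hy.2]⟩ ?_ ?_
            · rw [abs_of_nonneg (by linarith)]; linarith
            · rw [abs_of_nonneg (by linarith)]; linarith
      set A : ℝ := min ts ty with hAdef
      set B : ℝ := max ts ty with hBdef
      have hAB : A ≤ B := min_le_max
      have hAIcc : A ∈ Set.Icc (0:ℝ) 1 :=
        ⟨le_min hts.1 hty.1, le_trans (min_le_left _ _) hts.2⟩
      have hBIcc : B ∈ Set.Icc (0:ℝ) 1 :=
        ⟨le_trans hts.1 (le_max_left _ _), max_le hts.2 hty.2⟩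
      have hsub : Set.Icc A B ⊆ Set.Icc (0:ℝ) 1 := Set.Icc_subset_Icc hAIcc.1 hBIcc.2
      have huIccsub : Set.uIcc A B ⊆ Set.uIcc (0:ℝ) 1 := by
        rw [hIccuIcc, Set.uIcc_of_le hAB]; exact hsub
      -- FTC
      have hFTC : (∫ t in A..B, 2 * (F (v t) * φ t)) = 2 * Φ (v B) - 2 * Φ (v A) := by
        refine intervalIntegral.integral_eq_sub_of_hasDerivAt_of_le
          (f := fun t => 2 * Φ (v t)) (f' := fun t => 2 * (F (v t) * φ t)) hAB ?_ ?_ ?_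
        · exact continuousOn_const.mul (hΦcont.comp_continuousOn (hvC.mono hsub))
        · intro x hx
          have hxI : x ∈ Set.Ioo (0:ℝ) 1 :=
            ⟨lt_of_le_of_lt hAIcc.1 hx.1, lt_of_lt_of_le hx.2 hBIcc.2⟩
          have hxIcc : x ∈ Set.Icc (0:ℝ) 1 := Set.Ioo_subset_Icc_self hxI
          have hγd : HasDerivAt γ (D x) x := by
            have hd : DifferentiableWithinAt ℝ γ (Set.Icc 0 1) x :=
              (hγ.differentiableOn one_ne_zero) x hxIcc
            have hd' : DifferentiableAt ℝ γ x :=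
              hd.differentiableAt (Icc_mem_nhds hxI.1 hxI.2)
            have := hd'.hasDerivAt
            rwa [hgood x hxI] at this
          have hcd : HasFDerivAt c (fderiv ℝ c (γ x)) (γ x) := by
            have hdw : DifferentiableWithinAt ℝ c U (γ x) :=
              (hc.differentiableOn one_ne_zero) (γ x) (hγU x hxIcc)
            exact (hdw.differentiableAt (hUopen.mem_nhds (hγU x hxIcc))).hasFDerivAt
          have hv : HasDerivAt v (φ x) x := by
            have hcomp := hcd.comp_hasDerivAt x hγd
            rw [hvdef, hφdef]
            exact hcomp
          have := ((hΦd (v x)).comp x hv).const_mul (2:ℝ)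
          simpa [Function.comp, mul_comm] using this
        · exact ((continuousOn_const.mul ((hFcont.comp_continuousOn hvC).mul hφc)).mono
            (huIccsub.trans hIccuIcc.subset)).intervalIntegrable
      have habs : |(2:ℝ) * Φ (v B) - 2 * Φ (v A)| ≤ ∫ t in A..B, 2 * (F (v t) * |φ t|) := by
        rw [← hFTC]
        refine le_trans (intervalIntegral.abs_integral_le_integral_abs hAB) (le_of_eq ?_)
        apply intervalIntegral.integral_congr
        intro t _
        show |2 * (F (v t) * φ t)| = 2 * (F (v t) * |φ t|)
        rw [abs_mul, abs_mul, abs_of_nonneg (by norm_num : (0:ℝ) ≤ 2),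
          abs_of_nonneg (hF0 (v t))]
      -- splitting the unit interval
      have i1 : IntervalIntegrable (fun t => 2 * (F (v t) * |φ t|)) MeasureTheory.volume 0 A :=
        hgint.mono_set (by rw [hIccuIcc, Set.uIcc_of_le hAIcc.1]
                           exact Set.Icc_subset_Icc le_rfl hAIcc.2)
      have i2 : IntervalIntegrable (fun t => 2 * (F (v t) * |φ t|)) MeasureTheory.volume A B :=
        hgint.mono_set huIccsub
      have i3 : IntervalIntegrable (fun t => 2 * (F (v t) * |φ t|)) MeasureTheory.volume B 1 :=
        hgint.mono_set (by rw [hIccuIcc, Set.uIcc_of_le hBIcc.2]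
                           exact Set.Icc_subset_Icc hBIcc.1 le_rfl)
      have hsplit : (∫ t in A..B, 2 * (F (v t) * |φ t|))
          ≤ ∫ t in (0:ℝ)..1, 2 * (F (v t) * |φ t|) := by
        have e1 := intervalIntegral.integral_add_adjacent_intervals i1 i2
        have e2 := intervalIntegral.integral_add_adjacent_intervals (i1.trans i2) i3
        have n1 : (0:ℝ) ≤ ∫ t in (0:ℝ)..A, 2 * (F (v t) * |φ t|) :=
          intervalIntegral.integral_nonneg hAIcc.1 (fun x _ => hgnonneg x)
        have n3 : (0:ℝ) ≤ ∫ t in B..(1:ℝ), 2 * (F (v t) * |φ t|) :=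
          intervalIntegral.integral_nonneg hBIcc.2 (fun x _ => hgnonneg x)
        linarith [e1, e2]
      have hmono : (∫ t in (0:ℝ)..1, 2 * (F (v t) * |φ t|)) ≤ ∫ t in (0:ℝ)..1, E t * N t :=
        intervalIntegral.integral_mono_on zero_le_one hgint hENint hpt
      -- lower bound for the Φ gap
      have hgap : Real.sqrt m * (δ'/2) ≤ Φ b' - Φ a' := by
        have := hΦgap a' b' hab hJmem
        rw [hJlen] at this; exact this
      have hchain : Φ b' - Φ a' ≤ |Φ (v B) - Φ (v A)| := by
        have h1 : Φ (min (v ts) (v ty)) ≤ Φ a' := hΦmono _ _ hminle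
        have h2 : Φ b' ≤ Φ (max (v ts) (v ty)) := hΦmono _ _ hlemax
        have hvals : (v A = v ts ∧ v B = v ty) ∨ (v A = v ty ∧ v B = v ts) := by
          rcases le_total ts ty with h | h
          · left; rw [hAdef, hBdef, min_eq_left h, max_eq_right h]; exact ⟨rfl, rfl⟩
          · right; rw [hAdef, hBdef, min_eq_right h, max_eq_left h]; exact ⟨rfl, rfl⟩
        have habs' : |Φ (v B) - Φ (v A)| = Φ (max (v ts) (v ty)) - Φ (min (v ts) (v ty)) := by
          rcases hvals with ⟨e1, e2⟩ | ⟨e1, e2⟩ <;> rw [e1, e2] <;>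
            rcases le_total (v ts) (v ty) with h | h
          · rw [min_eq_left h, max_eq_right h, abs_of_nonneg (by linarith [hΦmono _ _ h])]
          · rw [min_eq_right h, max_eq_left h, abs_of_nonpos (by linarith [hΦmono _ _ h])]
            ring
          · rw [min_eq_left h, max_eq_right h, abs_of_nonpos (by linarith [hΦmono _ _ h])]
            ring
          · rw [min_eq_right h, max_eq_left h, abs_of_nonneg (by linarith [hΦmono _ _ h])]
        rw [habs']
        linarith
      have hfinal : δ' * Real.sqrt m ≤ |(2:ℝ) * Φ (v B) - 2 * Φ (v A)| := by
        have e : (2:ℝ) * Φ (v B) - 2 * Φ (v A) = 2 * (Φ (v B) - Φ (v A)) := by ring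
        rw [e, abs_mul, abs_of_nonneg (by norm_num : (0:ℝ) ≤ 2)]
        nlinarith [hgap, hchain, abs_nonneg (Φ (v B) - Φ (v A))]
      have hub : |(2:ℝ) * Φ (v B) - 2 * Φ (v A)| ≤ min m (δ' * Real.sqrt m) / 2 :=
        le_trans habs (le_trans hsplit (le_trans hmono hEN))
      have : min m (δ' * Real.sqrt m) / 2 ≤ δ' * Real.sqrt m / 2 := by
        have := min_le_right m (δ' * Real.sqrt m); linarith
      have hpos : 0 < δ' * Real.sqrt m := mul_pos hδ'pos hsqm
      linarith
    by_cases hnear : ∃ t ∈ Set.Icc (0:ℝ) 1, |v t - μ0| < δ'/2 ∨ |v t - μ1| < δ'/2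
    · obtain ⟨ts, hts, hd'⟩ := hnear
      rcases hd' with hd' | hd'
      · exact key μ0 (Or.inl rfl) ts hts t0 ht0 hd' hfar0
      · exact key μ1 (Or.inr rfl) ts hts t1 ht1 hd' hfar1
    · push_neg at hnear
      have hSall : ∀ t ∈ Set.Icc (0:ℝ) 1, v t ∈ S := by
        intro t ht
        exact hSmem' _ (hvIcc t ht) (hnear t ht).1 (hnear t ht).2
      have hpt1 : ∀ t ∈ Set.Icc (0:ℝ) 1, (m/ε) * N t ≤ E t * N t := by
        intro t ht
        have hN0 : 0 ≤ N t := by rw [hNdef]; exact Real.sqrt_nonneg _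
        refine mul_le_mul_of_nonneg_right ?_ hN0
        rw [hEdef]; simp only [genergy]
        have h1 : m ≤ f (c (γ t)) := by
          have := hmle (v t) (hSall t ht); rw [hvdef] at this; exact this
        have h2 : (0:ℝ) ≤ gradSq c (γ t) := by
          simp only [gradSq]; positivity
        have h3 := frobSq_nonneg (symGrad u (γ t) - c (γ t) • e0)
        have h4 : m/ε = (1/ε) * m := by ring
        have h5 : (1/ε) * m ≤ (1/ε) * f (c (γ t)) :=
          mul_le_mul_of_nonneg_left h1 (by positivity)
        nlinarith [mul_nonneg hε.le h2, mul_nonneg (by positivity : (0:ℝ) ≤ 1/ε) h3]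
      have hlow : m ≤ ∫ t in (0:ℝ)..1, E t * N t := by
        have h5 : (∫ t in (0:ℝ)..1, (m/ε) * N t) ≤ ∫ t in (0:ℝ)..1, E t * N t :=
          intervalIntegral.integral_mono_on zero_le_one (hNint.const_mul _) hENint hpt1
        have h6 : (∫ t in (0:ℝ)..1, (m/ε) * N t) = (m/ε) * ∫ t in (0:ℝ)..1, N t :=
          intervalIntegral.integral_const_mul _ _
        have h7 : (m/ε) * ε ≤ (m/ε) * ∫ t in (0:ℝ)..1, N t :=
          mul_le_mul_of_nonneg_left hlen' (by positivity)
        have h8 : (m/ε) * ε = m := div_mul_cancel₀ m hε.ne'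
        linarith
      have : min m (δ' * Real.sqrt m) / 2 ≤ m / 2 := by
        have := min_le_left m (δ' * Real.sqrt m); linarith
      linarith
  rcases hsuff with hs | hs
  · left; intro t ht
    have := hs t ht; rw [hvdef] at this
    exact le_trans this hδ'δ
  · right; intro t ht
    have := hs t ht; rw [hvdef, hμ1def] at this
    exact le_trans this hδ'δ
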